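/- arXiv:2507.02759 — 2 statements merged into one kernel-verified Lean document; each statement's English description precedes it below -/
import Mathlib

section
/- If S is a binomial random variable with parameters n = 6M and p = 1/2, then P(S ≤ M) ≤ 2^M · (3/4)^{6M} ≤ 2^{-M}. -/
open MeasureTheory ProbabilityTheory

private lemma coe12 : (1/2 : ENNReal) = ((1/2 : NNReal) : ENNReal) := by
  rw [ENNReal.coe_div (by norm_num)]; norm_num

private lemma coe32 : (3/2 : ENNReal) = ((3/2 : NNReal) : ENNReal) := by
  rw [ENNReal.coe_div (by norm_num)]; norm_num

private lemma coe34 : (3/4 : ENNReal) = ((3/4 : NNReal) : ENNReal) := by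
  rw [ENNReal.coe_div (by norm_num)]; norm_num

private lemma aux1 : ((1:ENNReal)/2) * (3/2) = 3/4 := by
  rw [coe12, coe32, coe34, ← ENNReal.coe_mul]
  congr 1
  rw [← NNReal.coe_inj]
  push_cast
  norm_num

private lemma aux2 : (1:ENNReal)/2 + 1 = 3/2 := by
  rw [coe12, coe32, show (1:ENNReal) = ((1:NNReal):ENNReal) by norm_num, ← ENNReal.coe_add]
  congr 1
  rw [← NNReal.coe_inj]
  push_cast
  norm_num

private lemma aux3 : (2 : ENNReal) * ((3/4)^6) ≤ (1/2 : ENNReal) := by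
  rw [coe12, coe34, show (2:ENNReal) = ((2:NNReal):ENNReal) by norm_num,
    ← ENNReal.coe_pow, ← ENNReal.coe_mul, ENNReal.coe_le_coe, ← NNReal.coe_le_coe]
  push_cast
  norm_num

private lemma hs12 : ((1:ENNReal) - 1/2) = 1/2 := by
  rw [one_div]
  exact ENNReal.one_sub_inv_two

private lemma binom_sum (n : ℕ) :
    ∑ i : Fin (n+1), (1/2:ENNReal)^(i:ℕ) * (n.choose i) = (3/2)^n := by
  rw [Fin.sum_univ_eq_sum_range (fun i => (1/2:ENNReal)^i * (n.choose i))]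
  have := add_pow (1/2:ENNReal) 1 n
  simp only [one_pow, mul_one] at this
  rw [← this, aux2]

theorem binomial_lower_tail (M : ℕ) (hM : 1 ≤ M)
    (h : (1 / 2 : ENNReal) ≤ 1) :
    (PMF.binomial (1 / 2) (by norm_num) (6 * M)).toMeasure {k | (k : ℕ) ≤ M}
      ≤ 2 ^ M * (3 / 4 : ENNReal) ^ (6 * M) ∧
    (2 : ENNReal) ^ M * (3 / 4 : ENNReal) ^ (6 * M) ≤ (2 : ENNReal)⁻¹ ^ M := by
  constructor
  · rw [PMF.toMeasure_apply_fintype]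
    have key : ∀ x : Fin (6*M+1),
        Set.indicator {k : Fin (6*M+1) | (k:ℕ) ≤ M} (PMF.binomial (1/2) (by norm_num) (6*M)) x
          ≤ (1/2:ENNReal)^(6*M) * (2^M * ((1/2)^(x:ℕ) * ((6*M).choose x))) := by
      intro x
      by_cases hx : (x:ℕ) ≤ M
      · rw [Set.indicator_of_mem (show x ∈ {k : Fin (6*M+1) | (k:ℕ) ≤ M} from hx),
          PMF.binomial_apply, ← coe12, hs12, ← pow_add]
        have h2 : (x:ℕ) + (((Fin.last (6*M)):ℕ) - (x:ℕ)) = 6*M := by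
          have := Fin.is_le x
          simp only [Fin.val_last]
          omega
        rw [h2]
        gcongr _ * ?_
        calc ((6*M).choose x : ENNReal) = 1 * ((6*M).choose x) := (one_mul _).symm
          _ ≤ (2^M * (1/2)^(x:ℕ)) * ((6*M).choose x) := by
              gcongr
              calc (1:ENNReal) = 2^M * (1/2)^M := by
                    rw [one_div, ← mul_pow,
                      ENNReal.mul_inv_cancel (by norm_num) (by norm_num), one_pow]
                _ ≤ 2^M * (1/2)^(x:ℕ) := by
                    gcongr _ * ?_
                    rw [one_div, ← ENNReal.inv_pow, ← ENNReal.inv_pow]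
                    exact ENNReal.inv_le_inv.mpr (pow_le_pow_right₀ one_le_two hx)
          _ = 2^M * ((1/2)^(x:ℕ) * ((6*M).choose x)) := by ring
      · rw [Set.indicator_of_notMem (show x ∉ {k : Fin (6*M+1) | (k:ℕ) ≤ M} from hx)]
        exact zero_le
    calc ∑ x, Set.indicator {k : Fin (6*M+1) | (k:ℕ) ≤ M} (PMF.binomial (1/2) (by norm_num) (6*M)) x
        ≤ ∑ x : Fin (6*M+1), (1/2:ENNReal)^(6*M) * (2^M * ((1/2)^(x:ℕ) * ((6*M).choose x))) :=
          Finset.sum_le_sum fun x _ => key x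
      _ = (1/2:ENNReal)^(6*M) * 2^M * ∑ x : Fin (6*M+1), (1/2:ENNReal)^(x:ℕ) * ((6*M).choose x) := by
          rw [Finset.mul_sum]
          exact Finset.sum_congr rfl fun x _ => by ring
      _ = (1/2:ENNReal)^(6*M) * 2^M * (3/2)^(6*M) := by rw [binom_sum]
      _ = 2^M * (3/4)^(6*M) := by
          rw [mul_comm ((1/2:ENNReal)^(6*M)) _, mul_assoc, ← mul_pow, aux1]
  · have base : (2 : ENNReal) * ((3/4)^6) ≤ (2:ENNReal)⁻¹ := by
      rw [← one_div]; exact aux3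
    calc (2 : ENNReal) ^ M * (3 / 4 : ENNReal) ^ (6 * M)
        = ((2:ENNReal) * (3/4)^6) ^ M := by
          rw [pow_mul, mul_pow]
      _ ≤ ((2:ENNReal)⁻¹) ^ M := pow_le_pow_left' base M
end

section
/- Consider the QuickSort-style recursion in which, for a fixed element e in an array, the subproblem size satisfies E[Y_i | Y_{i-1}] ≤ (3/4) Y_{i-1} with Y_0 = n. Then for any constant c ≥ 1 and M = c·log_2 n, the probability that Y_{6M} ≥ 1 (i.e., the recursion depth for e exceeds 6M) is at most 1/n^c, and by a union bound the probability that the recursion depth of QuickSort on n elements exceeds 6c·log_2 n is at most 1/n^{c-1}. -/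
open MeasureTheory ProbabilityTheory

theorem quicksort_depth_bound
    {Ω : Type*} [m0 : MeasurableSpace Ω] (μ : Measure Ω) [IsProbabilityMeasure μ]
    (n : ℕ) (hn : 2 ≤ n) (c : ℝ) (hc : 1 ≤ c)
    (M : ℝ) (hMdef : M = c * Real.logb 2 n)
    (Y : Fin n → ℕ → Ω → ℝ)
    (hmeas : ∀ e i, Measurable (Y e i))
    (hint : ∀ e i, Integrable (Y e i) μ)
    (hnonneg : ∀ e i ω, 0 ≤ Y e i ω)
    (hY0 : ∀ e ω, Y e 0 ω = n)
    (hcontr : ∀ e, ∀ i : ℕ, 1 ≤ i →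
      μ[Y e i | ⨆ j ∈ Finset.range i, MeasurableSpace.comap (Y e j) (borel ℝ)]
        ≤ᵐ[μ] fun ω => (3 / 4) * Y e (i - 1) ω) :
    (∀ e, μ {ω | 1 ≤ Y e ⌈6 * M⌉₊ ω} ≤ ENNReal.ofReal (1 / (n : ℝ) ^ c)) ∧
    μ (⋃ e, {ω | 1 ≤ Y e ⌈6 * M⌉₊ ω}) ≤ ENNReal.ofReal (1 / (n : ℝ) ^ (c - 1)) := by
  have hn1 : (1 : ℝ) ≤ n := by exact_mod_cast Nat.one_le_of_lt hn
  have hn0 : (0 : ℝ) < n := lt_of_lt_of_le one_pos hn1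
  -- expectation bound by induction
  have hexp : ∀ e, ∀ k : ℕ, ∫ ω, Y e k ω ∂μ ≤ (3 / 4 : ℝ) ^ k * n := by
    intro e k
    induction k with
    | zero =>
      simp only [pow_zero, one_mul]
      have : (fun ω => Y e 0 ω) = fun _ => (n : ℝ) := by
        funext ω; exact hY0 e ω
      rw [this, integral_const]; simp
    | succ k ih =>
      have hle : (⨆ j ∈ Finset.range (k + 1),
          MeasurableSpace.comap (Y e j) (borel ℝ)) ≤ m0 := by
        refine iSup_le fun j => iSup_le fun _ => ?_
        exact (hmeas e j).comap_le
      have h1 : ∫ ω, Y e (k + 1) ω ∂μ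
          = ∫ ω, (μ[Y e (k + 1) | ⨆ j ∈ Finset.range (k + 1),
              MeasurableSpace.comap (Y e j) (borel ℝ)]) ω ∂μ :=
        (integral_condExp hle).symm
      have h2 : ∫ ω, (μ[Y e (k + 1) | ⨆ j ∈ Finset.range (k + 1),
              MeasurableSpace.comap (Y e j) (borel ℝ)]) ω ∂μ
          ≤ ∫ ω, (3 / 4 : ℝ) * Y e k ω ∂μ := by
        refine integral_mono_ae integrable_condExp ((hint e k).const_mul _) ?_
        simpa using hcontr e (k + 1) (Nat.le_add_left 1 k)
      rw [h1]
      refine h2.trans ?_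
      rw [integral_const_mul]
      calc (3 / 4 : ℝ) * ∫ ω, Y e k ω ∂μ ≤ (3 / 4) * ((3 / 4) ^ k * n) := by
            refine mul_le_mul_of_nonneg_left ih (by norm_num)
        _ = (3 / 4) ^ (k + 1) * n := by ring
  -- Markov bound
  have hmarkov : ∀ e, μ {ω | 1 ≤ Y e ⌈6 * M⌉₊ ω}
      ≤ ENNReal.ofReal ((3 / 4 : ℝ) ^ ⌈6 * M⌉₊ * n) := by
    intro e
    have h := mul_meas_ge_le_integral_of_nonneg
      (ae_of_all μ (hnonneg e ⌈6 * M⌉₊)) (hint e ⌈6 * M⌉₊) 1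
    rw [one_mul] at h
    have hfin : μ {ω | 1 ≤ Y e ⌈6 * M⌉₊ ω} ≠ ⊤ := measure_ne_top μ _
    calc μ {ω | 1 ≤ Y e ⌈6 * M⌉₊ ω}
        = ENNReal.ofReal (μ {ω | 1 ≤ Y e ⌈6 * M⌉₊ ω}).toReal :=
          (ENNReal.ofReal_toReal hfin).symm
      _ ≤ ENNReal.ofReal ((3 / 4 : ℝ) ^ ⌈6 * M⌉₊ * n) :=
          ENNReal.ofReal_le_ofReal (h.trans (hexp e _))
  -- numeric bound : (3/4)^⌈6M⌉ * n ≤ 1 / n ^ c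
  have hM : (6 : ℝ) * M ≤ (⌈6 * M⌉₊ : ℝ) := Nat.le_ceil _
  have key : (3 / 4 : ℝ) ^ ⌈6 * M⌉₊ * n ≤ 1 / (n : ℝ) ^ c := by
    have h34 : (0 : ℝ) < 3 / 4 := by norm_num
    have step1 : (3 / 4 : ℝ) ^ ⌈6 * M⌉₊ ≤ (3 / 4 : ℝ) ^ (6 * M) := by
      rw [← Real.rpow_natCast]
      exact Real.rpow_le_rpow_of_exponent_ge h34 (by norm_num) hM
    have step2 : (3 / 4 : ℝ) ^ (6 * M) ≤ (1 / 4 : ℝ) ^ M := by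
      have hM0 : 0 ≤ M := by
        rw [hMdef]
        have : (1 : ℝ) ≤ Real.logb 2 n := by
          rw [Real.le_logb_iff_rpow_le (by norm_num) hn0]
          simpa using (show (2:ℝ) ≤ n by exact_mod_cast hn)
        positivity
      calc (3 / 4 : ℝ) ^ (6 * M) = ((3 / 4 : ℝ) ^ (6 : ℝ)) ^ M := by
            rw [← Real.rpow_mul (by norm_num)]
        _ ≤ (1 / 4 : ℝ) ^ M := by
            refine Real.rpow_le_rpow (by positivity) ?_ hM0
            rw [show ((6:ℝ)) = ((6:ℕ):ℝ) by norm_num, Real.rpow_natCast]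
            norm_num
    have step3 : (1 / 4 : ℝ) ^ M = (n : ℝ) ^ (-(2 * c)) := by
      have : (1 / 4 : ℝ) = (2 : ℝ) ^ (-2 : ℝ) := by
        rw [show (-2:ℝ) = -((2:ℕ):ℝ) by norm_num, Real.rpow_neg (by norm_num),
          Real.rpow_natCast]
        norm_num
      rw [this, ← Real.rpow_mul (by norm_num), hMdef,
        show (-2 : ℝ) * (c * Real.logb 2 n) = Real.logb 2 n * (-(2 * c)) by ring,
        Real.rpow_mul (by norm_num), Real.rpow_logb (by norm_num) (by norm_num) hn0]
    have step4 : (n : ℝ) ^ (-(2 * c)) * n ≤ (n : ℝ) ^ (-c) := by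
      have : (n : ℝ) ^ (-(2 * c)) * n = (n : ℝ) ^ (1 - 2 * c) := by
        rw [Real.rpow_sub hn0, Real.rpow_one, Real.rpow_mul (le_of_lt hn0)]
        rw [Real.rpow_neg (le_of_lt hn0), Real.rpow_mul (le_of_lt hn0)]
        ring
      rw [this]
      exact Real.rpow_le_rpow_of_exponent_le hn1 (by linarith)
    have : (3 / 4 : ℝ) ^ ⌈6 * M⌉₊ * n ≤ (n : ℝ) ^ (-c) := by
      calc (3 / 4 : ℝ) ^ ⌈6 * M⌉₊ * n ≤ (n : ℝ) ^ (-(2 * c)) * n := by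
            refine mul_le_mul_of_nonneg_right ?_ (le_of_lt hn0)
            rw [← step3]; exact step1.trans step2
        _ ≤ (n : ℝ) ^ (-c) := step4
    rwa [Real.rpow_neg (le_of_lt hn0), ← one_div] at this
  have part1 : ∀ e, μ {ω | 1 ≤ Y e ⌈6 * M⌉₊ ω} ≤ ENNReal.ofReal (1 / (n : ℝ) ^ c) :=
    fun e => (hmarkov e).trans (ENNReal.ofReal_le_ofReal key)
  refine ⟨part1, ?_⟩
  calc μ (⋃ e, {ω | 1 ≤ Y e ⌈6 * M⌉₊ ω})
      ≤ ∑' e : Fin n, μ {ω | 1 ≤ Y e ⌈6 * M⌉₊ ω} := measure_iUnion_le _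
    _ ≤ ∑' (_ : Fin n), ENNReal.ofReal (1 / (n : ℝ) ^ c) :=
        ENNReal.tsum_le_tsum fun e => part1 e
    _ = (n : ENNReal) * ENNReal.ofReal (1 / (n : ℝ) ^ c) := by
        rw [tsum_fintype]; simp [Finset.sum_const, nsmul_eq_mul]
    _ ≤ ENNReal.ofReal (1 / (n : ℝ) ^ (c - 1)) := by
        rw [show ((n : ENNReal)) = ENNReal.ofReal (n : ℝ) by simp,
          ← ENNReal.ofReal_mul (le_of_lt hn0)]
        refine ENNReal.ofReal_le_ofReal (le_of_eq ?_)
        rw [mul_one_div, eq_div_iff (by positivity), div_mul_eq_mul_div,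
          div_eq_one_iff_eq (by positivity),
          ← Real.rpow_one_add' (le_of_lt hn0) (by linarith : 1 + (c - 1) ≠ 0),
          show 1 + (c - 1) = c by ring]
end
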